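/- For positive integers n, k with n ≥ k², the qualitative independence graph QI(n,k) has diameter at most 2: for any two vertices P, Q there exists a vertex R qualitatively independent from both P and Q. -/

import Mathlib

/-- Two partitions of `{1,…,n}` are qualitatively independent if every class of one
meets every class of the other. -/
def QIPart {n : ℕ} (P Q : Finpartition (Finset.univ : Finset (Fin n))) : Prop :=
  ∀ A ∈ P.parts, ∀ B ∈ Q.parts, (A ∩ B).Nonempty

/-- Vertices of the qualitative independence graph `QI(n,k)`: `k`-partitions of an
`n`-set in which every class has size at least `k`. -/
def QIVertex (n k : ℕ) : Type :=
  {P : Finpartition (Finset.univ : Finset (Fin n)) //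
    P.parts.card = k ∧ ∀ A ∈ P.parts, k ≤ A.card}


namespace QIAux

variable {n k : ℕ}

/-- `Miss r s f v a`: no element of `s` in the `r`-fiber `v` has color `a`. -/
def Miss (r : Fin n → Fin k) (s : Finset (Fin n)) (f : Fin n → Fin k) (v a : Fin k) : Prop :=
  ∀ x ∈ s, r x = v → f x ≠ a

/-- Proper coloring: no two distinct elements of `s` with the same color share a
`p`-fiber or a `q`-fiber. -/
def IsProper (p q : Fin n → Fin k) (s : Finset (Fin n)) (f : Fin n → Fin k) : Prop :=
  ∀ x ∈ s, ∀ y ∈ s, x ≠ y → f x = f y → p x ≠ p y ∧ q x ≠ q y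

lemma isProper_symm {p q : Fin n → Fin k} {s : Finset (Fin n)} {f : Fin n → Fin k}
    (h : IsProper p q s f) : IsProper q p s f :=
  fun x hx y hy hxy hf => ⟨(h x hx y hy hxy hf).2, (h x hx y hy hxy hf).1⟩

lemma pathflip (p q : Fin n → Fin k) :
    ∀ (m : ℕ) (s : Finset (Fin n)) (f : Fin n → Fin k) (a b v : Fin k),
      s.card ≤ m → a ≠ b → IsProper p q s f → Miss q s f v b →
      ∃ f', IsProper p q s f' ∧ Miss q s f' v a ∧
        (∀ i, Miss p s f i a → Miss p s f' i a) ∧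
        (∀ x ∈ s, f' x = f x ∨ (f x = a ∧ f' x = b) ∨ (f x = b ∧ f' x = a)) := by
  intro m
  induction m with
  | zero =>
    intro s f a b v hcard hab hProp hmb
    exact ⟨f, hProp, fun x hx => by
      have : s = ∅ := Finset.card_eq_zero.mp (Nat.le_zero.mp hcard)
      simp [this] at hx, fun i h => h, fun x hx => Or.inl rfl⟩
  | succ m ih =>
    intro s f a b v hcard hab hProp hmb
    by_cases hA : ∃ y ∈ s, q y = v ∧ f y = a
    swap
    · push_neg at hA
      exact ⟨f, hProp, fun x hx hq hf => hA x hx hq hf, fun i h => h, fun x hx => Or.inl rfl⟩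
    obtain ⟨y, hy, hyv, hya⟩ := hA
    by_cases hB : ∃ z ∈ s, p z = p y ∧ f z = b
    swap
    · push_neg at hB
      refine ⟨Function.update f y b, ?_, ?_, ?_, ?_⟩
      · intro x hx x' hx' hne hfe
        rcases eq_or_ne x y with rfl | hxy
        · rcases eq_or_ne x' x with rfl | hx'y
          · exact absurd rfl hne
          · rw [Function.update_self, Function.update_of_ne hx'y] at hfe
            constructor
            · intro hp; exact hB x' hx' hp.symm hfe.symm
            · intro hq; exact hmb x' hx' (hq.symm.trans hyv) hfe.symm
        · rw [Function.update_of_ne hxy] at hfe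
          rcases eq_or_ne x' y with rfl | hx'y
          · rw [Function.update_self] at hfe
            constructor
            · intro hp; exact hB x hx (hp.trans rfl) hfe
            · intro hq; exact hmb x hx (hq.trans hyv) hfe
          · rw [Function.update_of_ne hx'y] at hfe
            exact hProp x hx x' hx' hne hfe
      · intro x hx hq hf
        rcases eq_or_ne x y with rfl | hxy
        · rw [Function.update_self] at hf; exact hab hf.symm
        · rw [Function.update_of_ne hxy] at hf
          exact absurd ((hProp x hx y hy hxy (hf.trans hya.symm)).2) (by simp [hq, hyv])
      · intro i hi x hx hp hf
        rcases eq_or_ne x y with rfl | hxy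
        · rw [Function.update_self] at hf; exact hab hf.symm
        · rw [Function.update_of_ne hxy] at hf; exact hi x hx hp hf
      · intro x hx
        rcases eq_or_ne x y with rfl | hxy
        · right; left; exact ⟨hya, Function.update_self _ _ _⟩
        · left; exact Function.update_of_ne hxy _ _
    obtain ⟨z, hz, hzp, hzb⟩ := hB
    have hyz : y ≠ z := fun h => hab (hya.symm.trans (h ▸ hzb))
    -- the second color at the same q-fiber as z is free in s''
    have hv1v : q z ≠ v := fun h => hmb z hz h hzb
    set s'' : Finset (Fin n) := (s.erase y).erase z with hs''
    have hzs : z ∈ s.erase y := Finset.mem_erase.mpr ⟨hyz.symm, hz⟩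
    have hsub : s'' ⊆ s := (Finset.erase_subset _ _).trans (Finset.erase_subset _ _)
    have hys'' : y ∉ s'' := fun h => (Finset.mem_erase.mp ((Finset.mem_erase.mp h).2)).1 rfl
    have hzs'' : z ∉ s'' := fun h => (Finset.mem_erase.mp h).1 rfl
    have hcard'' : s''.card ≤ m := by
      have h1 : (s.erase y).card < s.card := Finset.card_erase_lt_of_mem hy
      have h2 : s''.card < (s.erase y).card := Finset.card_erase_lt_of_mem hzs
      omega
    -- uniqueness facts under f
    have uniq_a_row : ∀ x ∈ s, p x = p y → f x = a → x = y := by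
      intro x hx hp hf
      by_contra hne
      exact (hProp x hx y hy hne (hf.trans hya.symm)).1 hp
    have uniq_b_row : ∀ x ∈ s, p x = p y → f x = b → x = z := by
      intro x hx hp hf
      by_contra hne
      exact (hProp x hx z hz hne (hf.trans hzb.symm)).1 (hp.trans hzp.symm)
    have uniq_a_colv : ∀ x ∈ s, q x = v → f x = a → x = y := by
      intro x hx hq hf
      by_contra hne
      exact (hProp x hx y hy hne (hf.trans hya.symm)).2 (hq.trans hyv.symm)
    have hmb'' : Miss q s'' f (q z) b := by
      intro x hx hq hf
      exact (hProp x (hsub hx) z hz (fun h => hzs'' (h ▸ hx)) (hf.trans hzb.symm)).2 hq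
    obtain ⟨f'', hP'', hMC'', hrows'', hswap''⟩ :=
      ih s'' f a b (q z) hcard'' hab (fun x hx x' hx' => hProp x (hsub hx) x' (hsub hx')) hmb''
    -- swap-form consequences
    have hswA : ∀ x ∈ s'', f'' x = a → f x = a ∨ f x = b := by
      intro x hx hf
      rcases hswap'' x hx with h | h | h
      · exact Or.inl (h.symm.trans hf)
      · exact absurd (hf.symm.trans h.2) hab
      · exact Or.inr h.1
    have hswB : ∀ x ∈ s'', f'' x = b → f x = b ∨ f x = a := by
      intro x hx hf
      rcases hswap'' x hx with h | h | h
      · exact Or.inl (h.symm.trans hf)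
      · exact Or.inr h.1
      · exact absurd (hf.symm.trans h.2) hab.symm
    set f' : Fin n → Fin k := Function.update (Function.update f'' y b) z a with hf'
    have hf'y : f' y = b := by
      rw [hf', Function.update_of_ne hyz, Function.update_self]
    have hf'z : f' z = a := by rw [hf', Function.update_self]
    have hf'o : ∀ x, x ≠ y → x ≠ z → f' x = f'' x := by
      intro x h1 h2
      rw [hf', Function.update_of_ne h2, Function.update_of_ne h1]
    -- key pair-facts
    have keyY : ∀ x ∈ s'', f'' x = b → p x ≠ p y ∧ q x ≠ q y := by
      intro x hx hf
      constructor
      · intro hp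
        rcases hswB x hx hf with h | h
        · exact hzs'' ((uniq_b_row x (hsub hx) hp h) ▸ hx)
        · exact hys'' ((uniq_a_row x (hsub hx) hp h) ▸ hx)
      · intro hq
        rcases hswB x hx hf with h | h
        · exact hmb x (hsub hx) (hq.trans hyv) h
        · exact hys'' ((uniq_a_colv x (hsub hx) (hq.trans hyv) h) ▸ hx)
    have keyZ : ∀ x ∈ s'', f'' x = a → p x ≠ p z ∧ q x ≠ q z := by
      intro x hx hf
      constructor
      · intro hp
        rcases hswA x hx hf with h | h
        · exact hys'' ((uniq_a_row x (hsub hx) (hp.trans hzp) h) ▸ hx)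
        · exact hzs'' ((uniq_b_row x (hsub hx) (hp.trans hzp) h) ▸ hx)
      · intro hq
        exact hMC'' x hx hq hf
    refine ⟨f', ?_, ?_, ?_, ?_⟩
    · -- proper
      intro x hx x' hx' hne hfe
      rcases eq_or_ne x y with rfl | hxy
      · rcases eq_or_ne x' z with rfl | hx'z
        · rw [hf'y, hf'z] at hfe; exact absurd hfe hab.symm
        · have hx's : x' ∈ s'' := by
            refine Finset.mem_erase.mpr ⟨hx'z, Finset.mem_erase.mpr ⟨hne.symm, hx'⟩⟩
          have : f'' x' = b := by rw [← hf'o x' hne.symm hx'z, ← hfe, hf'y]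
          exact ⟨fun h => (keyY x' hx's this).1 h.symm, fun h => (keyY x' hx's this).2 h.symm⟩
      rcases eq_or_ne x z with rfl | hxz
      · rcases eq_or_ne x' y with rfl | hx'y
        · rw [hf'z, hf'y] at hfe; exact absurd hfe hab
        · have hx's : x' ∈ s'' := by
            refine Finset.mem_erase.mpr ⟨hne.symm, Finset.mem_erase.mpr ⟨hx'y, hx'⟩⟩
          have : f'' x' = a := by rw [← hf'o x' hx'y hne.symm, ← hfe, hf'z]
          exact ⟨fun h => (keyZ x' hx's this).1 h.symm, fun h => (keyZ x' hx's this).2 h.symm⟩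
      have hxs : x ∈ s'' := Finset.mem_erase.mpr ⟨hxz, Finset.mem_erase.mpr ⟨hxy, hx⟩⟩
      rcases eq_or_ne x' y with rfl | hx'y
      · have : f'' x = b := (hf'o x hxy hxz) ▸ hf'y ▸ hfe
        exact keyY x hxs this
      rcases eq_or_ne x' z with rfl | hx'z
      · have : f'' x = a := (hf'o x hxy hxz) ▸ hf'z ▸ hfe
        exact keyZ x hxs this
      have hx's : x' ∈ s'' := Finset.mem_erase.mpr ⟨hx'z, Finset.mem_erase.mpr ⟨hx'y, hx'⟩⟩
      exact hP'' x hxs x' hx's hne (by rw [← hf'o x hxy hxz, ← hf'o x' hx'y hx'z]; exact hfe)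
    · -- Miss q s f' v a
      intro x hx hq hf
      rcases eq_or_ne x y with rfl | hxy
      · exact hab (hf'y ▸ hf).symm
      rcases eq_or_ne x z with rfl | hxz
      · exact hv1v hq
      have hxs : x ∈ s'' := Finset.mem_erase.mpr ⟨hxz, Finset.mem_erase.mpr ⟨hxy, hx⟩⟩
      have : f'' x = a := (hf'o x hxy hxz) ▸ hf
      rcases hswA x hxs this with h | h
      · exact hxy (uniq_a_colv x hx hq h)
      · exact hmb x hx hq h
    · -- rows preserved
      intro i hi x hx hp hf
      rcases eq_or_ne x y with rfl | hxy
      · exact hab (hf'y ▸ hf).symm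
      rcases eq_or_ne x z with rfl | hxz
      · -- i = p z = p y, but y witnesses a at row p y under f, contradicting hi
        exact hi y hy (hzp ▸ hp) hya
      have hxs : x ∈ s'' := Finset.mem_erase.mpr ⟨hxz, Finset.mem_erase.mpr ⟨hxy, hx⟩⟩
      have hi'' : Miss p s'' f i a := fun x' hx' => hi x' (hsub hx')
      exact hrows'' i hi'' x hxs hp ((hf'o x hxy hxz) ▸ hf)
    · -- swap form
      intro x hx
      rcases eq_or_ne x y with rfl | hxy
      · right; left; exact ⟨hya, hf'y⟩
      rcases eq_or_ne x z with rfl | hxz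
      · right; right; exact ⟨hzb, hf'z⟩
      have hxs : x ∈ s'' := Finset.mem_erase.mpr ⟨hxz, Finset.mem_erase.mpr ⟨hxy, hx⟩⟩
      rw [hf'o x hxy hxz]
      exact hswap'' x hxs

lemma extend_proper {p q : Fin n → Fin k} {s : Finset (Fin n)} {f : Fin n → Fin k}
    {x₀ : Fin n} {a : Fin k} (hx₀ : x₀ ∈ s) (hP : IsProper p q (s.erase x₀) f)
    (h1 : Miss p (s.erase x₀) f (p x₀) a) (h2 : Miss q (s.erase x₀) f (q x₀) a) :
    IsProper p q s (Function.update f x₀ a) := by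
  intro x hx x' hx' hne hfe
  rcases eq_or_ne x x₀ with rfl | hx1
  · rcases eq_or_ne x' x with rfl | hx2
    · exact absurd rfl hne
    · rw [Function.update_self, Function.update_of_ne hx2] at hfe
      have hx's : x' ∈ s.erase x := Finset.mem_erase.mpr ⟨hx2, hx'⟩
      exact ⟨fun hp => h1 x' hx's hp.symm hfe.symm, fun hq => h2 x' hx's hq.symm hfe.symm⟩
  · rw [Function.update_of_ne hx1] at hfe
    rcases eq_or_ne x' x₀ with rfl | hx2
    · rw [Function.update_self] at hfe
      have hxs : x ∈ s.erase x' := Finset.mem_erase.mpr ⟨hx1, hx⟩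
      exact ⟨fun hp => h1 x hxs hp hfe, fun hq => h2 x hxs hq hfe⟩
    · rw [Function.update_of_ne hx2] at hfe
      exact hP x (Finset.mem_erase.mpr ⟨hx1, hx⟩) x' (Finset.mem_erase.mpr ⟨hx2, hx'⟩) hne hfe

lemma exists_missing {T : Finset (Fin k)} (h : T.card < k) : ∃ a : Fin k, a ∉ T := by
  by_contra hc
  push_neg at hc
  have : (Finset.univ : Finset (Fin k)) ⊆ T := fun a _ => hc a
  have := Finset.card_le_card this
  simp at this
  omega

lemma konig (hk : 0 < k) (p q : Fin n → Fin k) :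
    ∀ (m : ℕ) (s : Finset (Fin n)),
      s.card ≤ m → (∀ i, (s.filter fun x => p x = i).card ≤ k) →
      (∀ l, (s.filter fun x => q x = l).card ≤ k) →
      ∃ f, IsProper p q s f := by
  intro m
  induction m with
  | zero =>
    intro s hcard _ _
    have : s = ∅ := Finset.card_eq_zero.mp (Nat.le_zero.mp hcard)
    exact ⟨fun _ => ⟨0, hk⟩, by simp [this, IsProper]⟩
  | succ m ih =>
    intro s hcard hrow hcol
    rcases s.eq_empty_or_nonempty with rfl | ⟨x₀, hx₀⟩
    · exact ⟨fun _ => ⟨0, hk⟩, by simp [IsProper]⟩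
    set s₁ := s.erase x₀ with hs₁
    have hc1 : s₁.card ≤ m := by
      rw [hs₁]
      have := Finset.card_erase_lt_of_mem hx₀; omega
    have hsub : s₁ ⊆ s := Finset.erase_subset _ _
    obtain ⟨f₁, hf₁⟩ := ih s₁ hc1
      (fun i => le_trans (Finset.card_le_card (Finset.filter_subset_filter _ hsub)) (hrow i))
      (fun l => le_trans (Finset.card_le_card (Finset.filter_subset_filter _ hsub)) (hcol l))
    have hrowcard : ((s₁.filter fun x => p x = p x₀).image f₁).card < k := by
      have h1 : (s₁.filter fun x => p x = p x₀) ⊆ (s.filter fun x => p x = p x₀).erase x₀ := by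
        intro x hx
        rw [Finset.mem_filter] at hx
        exact Finset.mem_erase.mpr ⟨(Finset.mem_erase.mp hx.1).1,
          Finset.mem_filter.mpr ⟨hsub hx.1, hx.2⟩⟩
      have h2 : x₀ ∈ s.filter fun x => p x = p x₀ := Finset.mem_filter.mpr ⟨hx₀, rfl⟩
      have h3 := Finset.card_erase_of_mem h2
      have h4 := Finset.card_le_card h1
      have h5 := Finset.card_image_le (s := s₁.filter fun x => p x = p x₀) (f := f₁)
      have h6 := hrow (p x₀)
      have h7 : 0 < (s.filter fun x => p x = p x₀).card := Finset.card_pos.mpr ⟨x₀, h2⟩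
      omega
    have hcolcard : ((s₁.filter fun x => q x = q x₀).image f₁).card < k := by
      have h1 : (s₁.filter fun x => q x = q x₀) ⊆ (s.filter fun x => q x = q x₀).erase x₀ := by
        intro x hx
        rw [Finset.mem_filter] at hx
        exact Finset.mem_erase.mpr ⟨(Finset.mem_erase.mp hx.1).1,
          Finset.mem_filter.mpr ⟨hsub hx.1, hx.2⟩⟩
      have h2 : x₀ ∈ s.filter fun x => q x = q x₀ := Finset.mem_filter.mpr ⟨hx₀, rfl⟩
      have h3 := Finset.card_erase_of_mem h2
      have h4 := Finset.card_le_card h1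
      have h5 := Finset.card_image_le (s := s₁.filter fun x => q x = q x₀) (f := f₁)
      have h6 := hcol (q x₀)
      have h7 : 0 < (s.filter fun x => q x = q x₀).card := Finset.card_pos.mpr ⟨x₀, h2⟩
      omega
    obtain ⟨a, ha⟩ := exists_missing hrowcard
    obtain ⟨b, hb⟩ := exists_missing hcolcard
    have hMa : Miss p s₁ f₁ (p x₀) a := by
      intro x hx hp hf
      exact ha (Finset.mem_image.mpr ⟨x, Finset.mem_filter.mpr ⟨hx, hp⟩, hf⟩)
    have hMb : Miss q s₁ f₁ (q x₀) b := by
      intro x hx hq hf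
      exact hb (Finset.mem_image.mpr ⟨x, Finset.mem_filter.mpr ⟨hx, hq⟩, hf⟩)
    rcases eq_or_ne a b with rfl | hab
    · exact ⟨Function.update f₁ x₀ a, extend_proper hx₀ hf₁ hMa hMb⟩
    · obtain ⟨f', hP', hMC', hrows', _⟩ := pathflip p q s₁.card s₁ f₁ a b (q x₀) le_rfl hab hf₁ hMb
      exact ⟨Function.update f' x₀ a, extend_proper hx₀ hP' (hrows' _ hMa) hMC'⟩

/-- Every `p`-fiber of `s` sees at least `min k (fiber size)` colors under `f`. -/
def SeesHalf (p : Fin n → Fin k) (s : Finset (Fin n)) (f : Fin n → Fin k) : Prop :=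
  ∀ i, min k ((s.filter fun x => p x = i).card) ≤ ((s.filter fun x => p x = i).image f).card

lemma gupta_step {p q : Fin n → Fin k} {s : Finset (Fin n)} {x₀ : Fin n} (hx₀ : x₀ ∈ s)
    (hbig : k < (s.filter fun x => p x = p x₀).card)
    {f₁ : Fin n → Fin k} (h₁p : SeesHalf p (s.erase x₀) f₁)
    (h₁q : SeesHalf q (s.erase x₀) f₁) :
    ∃ f, SeesHalf p s f ∧ SeesHalf q s f := by
  classical
  set s₁ := s.erase x₀ with hs₁
  set Cv := ((s₁.filter fun x => q x = q x₀).image f₁) with hCv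
  set γ := if hg : ∃ c, c ∉ Cv then hg.choose else f₁ x₀ with hγ
  set f := Function.update f₁ x₀ γ with hf
  have hfx₀ : f x₀ = γ := by rw [hf, Function.update_self]
  have hfs₁ : ∀ x ∈ s₁, f x = f₁ x := by
    intro x hx
    have : x ≠ x₀ := (Finset.mem_erase.mp hx).1
    rw [hf, Function.update_of_ne this]
  -- images over s₁-fibers are contained in images over s-fibers
  have himg : ∀ (r : Fin n → Fin k) (w : Fin k),
      ((s₁.filter fun x => r x = w).image f₁) ⊆ ((s.filter fun x => r x = w).image f) := by
    intro r w c hc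
    obtain ⟨x, hx, hxc⟩ := Finset.mem_image.mp hc
    have hx' := Finset.mem_filter.mp hx
    refine Finset.mem_image.mpr
      ⟨x, Finset.mem_filter.mpr ⟨(Finset.erase_subset _ _) hx'.1, hx'.2⟩, ?_⟩
    rw [hfs₁ x hx'.1]; exact hxc
  -- fibers away from x₀ are unchanged
  have hsame : ∀ (r : Fin n → Fin k) (w : Fin k), w ≠ r x₀ →
      (s.filter fun x => r x = w) = (s₁.filter fun x => r x = w) := by
    intro r w hw
    ext x
    simp only [Finset.mem_filter, hs₁, Finset.mem_erase]
    constructor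
    · rintro ⟨hxs, hxw⟩
      exact ⟨⟨fun h => hw (h ▸ hxw).symm, hxs⟩, hxw⟩
    · rintro ⟨⟨_, hxs⟩, hxw⟩
      exact ⟨hxs, hxw⟩
  have hcard_p : (s₁.filter fun x => p x = p x₀).card + 1 = (s.filter fun x => p x = p x₀).card := by
    have : (s₁.filter fun x => p x = p x₀) = (s.filter fun x => p x = p x₀).erase x₀ := by
      ext x
      simp only [Finset.mem_filter, hs₁, Finset.mem_erase]
      tauto
    rw [this, Finset.card_erase_of_mem (show x₀ ∈ s.filter fun x => p x = p x₀ from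
      Finset.mem_filter.mpr ⟨hx₀, rfl⟩)]
    have : 0 < (s.filter fun x => p x = p x₀).card :=
      Finset.card_pos.mpr ⟨x₀, Finset.mem_filter.mpr ⟨hx₀, rfl⟩⟩
    omega
  have hcard_q : (s₁.filter fun x => q x = q x₀).card + 1 = (s.filter fun x => q x = q x₀).card := by
    have : (s₁.filter fun x => q x = q x₀) = (s.filter fun x => q x = q x₀).erase x₀ := by
      ext x
      simp only [Finset.mem_filter, hs₁, Finset.mem_erase]
      tauto
    rw [this, Finset.card_erase_of_mem (show x₀ ∈ s.filter fun x => q x = q x₀ from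
      Finset.mem_filter.mpr ⟨hx₀, rfl⟩)]
    have : 0 < (s.filter fun x => q x = q x₀).card :=
      Finset.card_pos.mpr ⟨x₀, Finset.mem_filter.mpr ⟨hx₀, rfl⟩⟩
    omega
  refine ⟨f, ?_, ?_⟩
  · intro i
    rcases eq_or_ne i (p x₀) with rfl | hi
    · have h1 : min k ((s₁.filter fun x => p x = p x₀).card)
          ≤ ((s₁.filter fun x => p x = p x₀).image f₁).card := h₁p (p x₀)
      have h2 := Finset.card_le_card (himg p (p x₀))
      have h3 : k ≤ (s₁.filter fun x => p x = p x₀).card := by omega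
      calc min k ((s.filter fun x => p x = p x₀).card) ≤ k := min_le_left _ _
        _ = min k ((s₁.filter fun x => p x = p x₀).card) := (min_eq_left h3).symm
        _ ≤ ((s₁.filter fun x => p x = p x₀).image f₁).card := h1
        _ ≤ _ := h2
    · rw [hsame p i hi, Finset.image_congr (fun x hx => hfs₁ x (Finset.mem_filter.mp hx).1)]
      exact h₁p i
  · intro l
    rcases eq_or_ne l (q x₀) with rfl | hl
    · have hsubCv : Cv ⊆ ((s.filter fun x => q x = q x₀).image f) := himg q (q x₀)
      by_cases hg : ∃ c, c ∉ Cv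
      · have hγg : γ ∉ Cv := by rw [hγ, dif_pos hg]; exact hg.choose_spec
        have hγmem : γ ∈ ((s.filter fun x => q x = q x₀).image f) :=
          Finset.mem_image.mpr ⟨x₀, Finset.mem_filter.mpr ⟨hx₀, rfl⟩, hfx₀⟩
        have hins : insert γ Cv ⊆ ((s.filter fun x => q x = q x₀).image f) :=
          Finset.insert_subset hγmem hsubCv
        have h4 := Finset.card_le_card hins
        rw [Finset.card_insert_of_notMem hγg] at h4
        have h5 : min k ((s₁.filter fun x => q x = q x₀).card) ≤ Cv.card := h₁q (q x₀)
        have h6 := hcard_q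
        omega
      · push_neg at hg
        have : (Finset.univ : Finset (Fin k)) ⊆ Cv := fun c _ => hg c
        have h7 := Finset.card_le_card this
        rw [Finset.card_univ, Fintype.card_fin] at h7
        have h8 := Finset.card_le_card hsubCv
        calc min k ((s.filter fun x => q x = q x₀).card) ≤ k := min_le_left _ _
          _ ≤ Cv.card := h7
          _ ≤ _ := h8
    · rw [hsame q l hl, Finset.image_congr (fun x hx => hfs₁ x (Finset.mem_filter.mp hx).1)]
      exact h₁q l

lemma gupta (hk : 0 < k) (p q : Fin n → Fin k) :
    ∀ (m : ℕ) (s : Finset (Fin n)), s.card ≤ m →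
      ∃ f, SeesHalf p s f ∧ SeesHalf q s f := by
  intro m
  induction m with
  | zero =>
    intro s hcard
    have hs : s = ∅ := Finset.card_eq_zero.mp (Nat.le_zero.mp hcard)
    refine ⟨fun _ => ⟨0, hk⟩, ?_, ?_⟩ <;> intro i <;> simp [hs]
  | succ m ih =>
    intro s hcard
    by_cases hbp : ∃ i, k < (s.filter fun x => p x = i).card
    · obtain ⟨i, hi⟩ := hbp
      have hpos : 0 < (s.filter fun x => p x = i).card := by omega
      obtain ⟨x₀, hx₀f⟩ := Finset.card_pos.mp hpos
      have hx₀ := Finset.mem_filter.mp hx₀f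
      have hc1 : (s.erase x₀).card ≤ m := by
        have := Finset.card_erase_lt_of_mem hx₀.1; omega
      obtain ⟨f₁, h₁p, h₁q⟩ := ih (s.erase x₀) hc1
      exact gupta_step hx₀.1 (hx₀.2 ▸ hi) h₁p h₁q
    by_cases hbq : ∃ l, k < (s.filter fun x => q x = l).card
    · obtain ⟨l, hl⟩ := hbq
      have hpos : 0 < (s.filter fun x => q x = l).card := by omega
      obtain ⟨x₀, hx₀f⟩ := Finset.card_pos.mp hpos
      have hx₀ := Finset.mem_filter.mp hx₀f
      have hc1 : (s.erase x₀).card ≤ m := by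
        have := Finset.card_erase_lt_of_mem hx₀.1; omega
      obtain ⟨f₁, h₁q, h₁p⟩ := ih (s.erase x₀) hc1
      obtain ⟨f, hfq, hfp⟩ := gupta_step (q := p) hx₀.1 (hx₀.2 ▸ hl) h₁p h₁q
      exact ⟨f, hfp, hfq⟩
    · push_neg at hbp hbq
      obtain ⟨f, hf⟩ := konig hk p q s.card s le_rfl hbp hbq
      have hinj : ∀ i : Fin k, ((s.filter fun x => p x = i).image f).card
          = (s.filter fun x => p x = i).card := by
        intro i
        apply Finset.card_image_of_injOn
        intro x hx y hy hfe
        by_contra hne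
        have hx' := Finset.mem_filter.mp hx
        have hy' := Finset.mem_filter.mp hy
        exact (hf x hx'.1 y hy'.1 hne hfe).1 (hx'.2.trans hy'.2.symm)
      have hinjq : ∀ l : Fin k, ((s.filter fun x => q x = l).image f).card
          = (s.filter fun x => q x = l).card := by
        intro l
        apply Finset.card_image_of_injOn
        intro x hx y hy hfe
        by_contra hne
        have hx' := Finset.mem_filter.mp hx
        have hy' := Finset.mem_filter.mp hy
        exact (hf x hx'.1 y hy'.1 hne hfe).2 (hx'.2.trans hy'.2.symm)
      exact ⟨f, fun i => (hinj i).symm ▸ min_le_right _ _,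
        fun l => (hinjq l).symm ▸ min_le_right _ _⟩

/-- Index map of a `k`-part partition, together with its basic properties. -/
lemma partition_index (V : Finpartition (Finset.univ : Finset (Fin n)))
    (hcard : V.parts.card = k) (hsize : ∀ A ∈ V.parts, k ≤ A.card) :
    ∃ p : Fin n → Fin k,
      (∀ i, k ≤ (Finset.univ.filter fun x => p x = i).card) ∧
      (∀ A ∈ V.parts, ∃ i : Fin k, ∀ x, p x = i ↔ x ∈ A) := by
  classical
  have hP' : Fintype.card ↥V.parts = k := by rw [Fintype.card_coe]; exact hcard
  let eP := Fintype.equivFinOfCardEq hP'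
  refine ⟨fun x => eP ⟨V.part x, V.part_mem.mpr (Finset.mem_univ x)⟩, ?_, ?_⟩ <;>
    [skip; skip]
  case _ =>
    -- fiber cardinalities
    intro i
    have hmem : ∀ x : Fin n,
        (eP ⟨V.part x, V.part_mem.mpr (Finset.mem_univ x)⟩ = i) ↔ x ∈ (eP.symm i).1 := by
      intro x
      constructor
      · intro h
        have h2 : (⟨V.part x, V.part_mem.mpr (Finset.mem_univ x)⟩ : ↥V.parts) = eP.symm i :=
          (Equiv.eq_symm_apply eP).mpr h
        have h3 : V.part x = (eP.symm i).1 := congrArg Subtype.val h2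
        exact h3 ▸ V.mem_part (Finset.mem_univ x)
      · intro hx
        have h3 : V.part x = (eP.symm i).1 := V.part_eq_of_mem (eP.symm i).2 hx
        have h2 : (⟨V.part x, V.part_mem.mpr (Finset.mem_univ x)⟩ : ↥V.parts) = eP.symm i :=
          Subtype.ext h3
        rw [h2, Equiv.apply_symm_apply]
    have : (Finset.univ.filter fun x => eP ⟨V.part x, V.part_mem.mpr (Finset.mem_univ x)⟩ = i)
        = (eP.symm i).1 := by
      ext x
      simp only [Finset.mem_filter, Finset.mem_univ, true_and]
      exact hmem x
    rw [this]
    exact hsize _ (eP.symm i).2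
  case _ =>
    intro A hA
    refine ⟨eP ⟨A, hA⟩, fun x => ?_⟩
    constructor
    · intro h
      have h2 : (⟨V.part x, V.part_mem.mpr (Finset.mem_univ x)⟩ : ↥V.parts) = ⟨A, hA⟩ :=
        eP.injective h
      have h3 : V.part x = A := congrArg Subtype.val h2
      exact h3 ▸ V.mem_part (Finset.mem_univ x)
    · intro hx
      exact congrArg eP (Subtype.ext (V.part_eq_of_mem hA hx))

end QIAux

open QIAux in
/-- For `n ≥ k²`, the qualitative independence graph `QI(n,k)` has diameter at
most 2: for any two vertices `P, Q` there is a vertex `R` qualitatively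
independent from both. -/
theorem QIGraph_diameter_le_two (n k : ℕ) (hk : 0 < k) (hn : k ^ 2 ≤ n)
    (P Q : QIVertex n k) :
    ∃ R : QIVertex n k, QIPart R.1 P.1 ∧ QIPart R.1 Q.1 := by
  classical
  obtain ⟨Pp, hPcard, hPsize⟩ := P
  obtain ⟨Qp, hQcard, hQsize⟩ := Q
  obtain ⟨p, hpcard, hpparts⟩ := partition_index Pp hPcard hPsize
  obtain ⟨q, hqcard, hqparts⟩ := partition_index Qp hQcard hQsize
  obtain ⟨f, hfp, hfq⟩ := gupta hk p q (Finset.univ.card) Finset.univ le_rfl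
  -- every color appears in every fiber of `p` and of `q`
  have hcov : ∀ (r : Fin n → Fin k),
      (∀ i, k ≤ (Finset.univ.filter fun x => r x = i).card) →
      SeesHalf r Finset.univ f →
      ∀ (j i : Fin k), ∃ x, r x = i ∧ f x = j := by
    intro r hrcard hsees j i
    have h1 := hrcard i
    have h2 := hsees i
    rw [min_eq_left h1] at h2
    have h3 : ((Finset.univ.filter fun x => r x = i).image f).card ≤ k := by
      have := Finset.card_le_univ ((Finset.univ.filter fun x => r x = i).image f)
      simpa using this
    have h4 : ((Finset.univ.filter fun x => r x = i).image f) = Finset.univ :=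
      Finset.eq_univ_of_card _ (by rw [Fintype.card_fin]; omega)
    have h5 : j ∈ (Finset.univ.filter fun x => r x = i).image f := h4 ▸ Finset.mem_univ j
    obtain ⟨x, hx, hfx⟩ := Finset.mem_image.mp h5
    exact ⟨x, (Finset.mem_filter.mp hx).2, hfx⟩
  have hcovp := hcov p hpcard hfp
  have hcovq := hcov q hqcard hfq
  -- color fibers
  set fib : Fin k → Finset (Fin n) := fun j => Finset.univ.filter fun x => f x = j with hfib
  have hfibsize : ∀ j, k ≤ (fib j).card := by
    intro j
    have hmaps : ∀ i : Fin k, i ∈ (Finset.univ : Finset (Fin k)) →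
        (hcovp j i).choose ∈ fib j := by
      intro i _
      exact Finset.mem_filter.mpr ⟨Finset.mem_univ _, (hcovp j i).choose_spec.2⟩
    have hinj : Set.InjOn (fun i => (hcovp j i).choose) ↑(Finset.univ : Finset (Fin k)) := by
      intro i _ i' _ h
      have h' : (hcovp j i).choose = (hcovp j i').choose := h
      have h1 := (hcovp j i).choose_spec.1
      have h2 := (hcovp j i').choose_spec.1
      rw [← h1, ← h2, h']
    have := Finset.card_le_card_of_injOn _ hmaps hinj
    simpa using this
  have hfibne : ∀ j, (fib j).Nonempty := fun j => Finset.card_pos.mp (by have := hfibsize j; omega)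
  have hfibeq : ∀ (x : Fin n) (j : Fin k), x ∈ fib j ↔ f x = j := by
    intro x j; simp [hfib]
  -- build the partition
  have hdisj : ∀ (A B : Finset (Fin n)), A ∈ Finset.univ.image fib →
      B ∈ Finset.univ.image fib → A ≠ B → Disjoint A B := by
    intro A B hA hB hAB
    obtain ⟨jA, _, rfl⟩ := Finset.mem_image.mp hA
    obtain ⟨jB, _, rfl⟩ := Finset.mem_image.mp hB
    refine Finset.disjoint_left.mpr fun {x} hxA hxB => ?_
    have h1 := (hfibeq x jA).mp hxA
    have h2 := (hfibeq x jB).mp hxB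
    exact hAB (by rw [← h1, ← h2])
  let R : Finpartition (Finset.univ : Finset (Fin n)) :=
    { parts := Finset.univ.image fib
      supIndep := by
        rw [Finset.supIndep_iff_pairwiseDisjoint]
        intro A hA B hB hAB
        exact hdisj A B hA hB hAB
      sup_parts := by
        apply le_antisymm
        · exact Finset.sup_le fun A _ => Finset.subset_univ A
        · intro x _
          exact Finset.mem_sup.mpr ⟨fib (f x), Finset.mem_image_of_mem fib (Finset.mem_univ _),
            (hfibeq x (f x)).mpr rfl⟩
      bot_notMem := by
        intro h
        obtain ⟨j, _, hj⟩ := Finset.mem_image.mp h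
        obtain ⟨x, hx⟩ := hfibne j
        rw [hj] at hx
        exact Finset.notMem_empty x hx }
  have hRparts : R.parts = Finset.univ.image fib := rfl
  have hRcard : R.parts.card = k := by
    rw [hRparts, Finset.card_image_of_injOn, Finset.card_univ, Fintype.card_fin]
    intro j _ j' _ h
    obtain ⟨x, hx⟩ := hfibne j
    have hx' : x ∈ fib j' := h ▸ hx
    rw [← (hfibeq x j).mp hx, ← (hfibeq x j').mp hx']
  have hRsize : ∀ A ∈ R.parts, k ≤ A.card := by
    intro A hA
    obtain ⟨j, _, rfl⟩ := Finset.mem_image.mp hA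
    exact hfibsize j
  refine ⟨⟨R, hRcard, hRsize⟩, ?_, ?_⟩
  · intro A hA B hB
    obtain ⟨j, _, rfl⟩ := Finset.mem_image.mp hA
    obtain ⟨i, hi⟩ := hpparts B hB
    obtain ⟨x, hxp, hxf⟩ := hcovp j i
    exact ⟨x, Finset.mem_inter.mpr ⟨(hfibeq x j).mpr hxf, (hi x).mp hxp⟩⟩
  · intro A hA B hB
    obtain ⟨j, _, rfl⟩ := Finset.mem_image.mp hA
    obtain ⟨i, hi⟩ := hqparts B hB
    obtain ⟨x, hxq, hxf⟩ := hcovq j i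
    exact ⟨x, Finset.mem_inter.mpr ⟨(hfibeq x j).mpr hxf, (hi x).mp hxq⟩⟩
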